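/- Let H ⊕ L be a direct sum of two finite-dimensional complex inner product spaces and S a unitary on H ⊕ L. Then for every ξ ∈ H there exist τ ∈ H and v ∈ L such that S(ξ ⊕ v) = τ ⊕ v. -/

import Mathlib

open Submodule
open scoped ComplexInnerProductSpace

/-- **Transduction (existence).** Let `W = H ⊕ Hᗮ` be a finite-dimensional complex inner
product space decomposed into a public space `H` and private space `L = Hᗮ`, and let `S`
be a unitary on `W`. Then for every `ξ ∈ H` there exist `τ ∈ H` and `v ∈ L` such that
`S (ξ ⊕ v) = τ ⊕ v`. -/
theorem transduction_exists
    {W : Type*} [NormedAddCommGroup W] [InnerProductSpace ℂ W] [FiniteDimensional ℂ W]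
    (H : Submodule ℂ W) (S : W ≃ₗᵢ[ℂ] W) :
    ∀ ξ ∈ H, ∃ τ ∈ H, ∃ v ∈ Hᗮ, S (ξ + v) = τ + v := by
  intro ξ hξ
  set L := Hᗮ with hL
  let Q : W →L[ℂ] L := orthogonalProjection L
  let A : L →ₗ[ℂ] L := (Q : W →ₗ[ℂ] L) ∘ₗ ((S.toLinearEquiv : W →ₗ[ℂ] W) ∘ₗ L.subtype)
  let T : L →ₗ[ℂ] L := LinearMap.id - A
  -- key fact: fixed points of A are fixed points of S
  have hfix : ∀ w : L, A w = w → S (w : W) = (w : W) := by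
    intro w hw
    have hAw : (A w : W) = (Q (S (w : W)) : W) := rfl
    -- norm equality forces S w ∈ L and equality
    have hsub : S (w : W) - (Q (S (w : W)) : W) ∈ Lᗮ :=
      sub_starProjection_mem_orthogonal (K := L) _
    have hinner : ⟪(Q (S (w : W)) : W), S (w : W) - (Q (S (w : W)) : W)⟫ = 0 := by
      exact (Submodule.mem_orthogonal L _).1 hsub _ (Q (S (w : W))).2
    have hpyth : ‖S (w : W)‖ ^ 2 = ‖(Q (S (w : W)) : W)‖ ^ 2
        + ‖S (w : W) - (Q (S (w : W)) : W)‖ ^ 2 := by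
      have := norm_add_sq (𝕜 := ℂ) (Q (S (w : W)) : W) (S (w : W) - (Q (S (w : W)) : W))
      simp [hinner] at this
      simpa using this
    have hQnorm : ‖(Q (S (w : W)) : W)‖ = ‖S (w : W)‖ := by
      rw [← hAw, hw]
      simp [S.norm_map]
    have : ‖S (w : W) - (Q (S (w : W)) : W)‖ ^ 2 = 0 := by
      rw [hQnorm] at hpyth; linarith
    have hz : S (w : W) = (Q (S (w : W)) : W) := by
      have := pow_eq_zero_iff (n := 2) (by norm_num) |>.1 this
      rwa [norm_eq_zero, sub_eq_zero] at this
    rw [hz, ← hAw, hw]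
  -- the target vector
  have hmem : Q (S ξ) ∈ LinearMap.range T := by
    have hfd : (LinearMap.range T)ᗮᗮ = LinearMap.range T :=
      Submodule.orthogonal_orthogonal _
    rw [← hfd]
    rw [Submodule.mem_orthogonal]
    intro w hw
    -- w ⊥ range T, in particular ⟪T w, w⟫ = 0
    have h1 : ⟪T w, w⟫ = 0 := (Submodule.mem_orthogonal _ w).1 hw (T w) ⟨w, rfl⟩
    have h2 : ⟪A w, w⟫ = (‖w‖ : ℂ) ^ 2 := by
      have : ⟪w - A w, w⟫ = 0 := by simpa [T, sub_eq_add_neg] using h1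
      rw [inner_sub_left] at this
      have := sub_eq_zero.1 this
      rw [← this, inner_self_eq_norm_sq_to_K]
      norm_cast
    -- ‖A w‖ ≤ ‖w‖
    have h3 : ‖A w‖ ≤ ‖w‖ := by
      have : ‖Q (S (w : W))‖ ≤ ‖S (w : W)‖ := by
        exact (orthogonalProjection L).le_opNorm (S (w : W)) |>.trans
          (mul_le_of_le_one_left (norm_nonneg _) (orthogonalProjection_norm_le L))
      simpa [A, S.norm_map] using this
    -- so A w = w
    have h4 : A w = w := by
      have hexp : ‖A w - w‖ ^ 2 = ‖A w‖ ^ 2 - 2 * (RCLike.re (⟪A w, w⟫)) + ‖w‖ ^ 2 := by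
        have := norm_sub_sq (𝕜 := ℂ) (A w) w
        simpa [pow_two] using this
      have hre : RCLike.re (⟪A w, w⟫) = ‖w‖ ^ 2 := by
        rw [h2]; norm_cast
      have hle : ‖A w - w‖ ^ 2 ≤ 0 := by
        rw [hexp, hre]
        nlinarith [sq_nonneg ‖w‖, sq_nonneg ‖A w‖, norm_nonneg (A w), norm_nonneg w]
      have : ‖A w - w‖ ^ 2 = 0 := le_antisymm hle (by positivity)
      have := pow_eq_zero_iff (n := 2) (by norm_num) |>.1 this
      rwa [norm_eq_zero, sub_eq_zero] at this
    have h5 : S (w : W) = (w : W) := hfix w h4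
    -- conclude ⟪w, Q (S ξ)⟫ = 0
    have h6 : ⟪(w : W), (Q (S ξ) : W)⟫ = ⟪(w : W), S ξ⟫ := by
      have hsub : S ξ - (Q (S ξ) : W) ∈ Lᗮ :=
        sub_starProjection_mem_orthogonal (K := L) _
      have : ⟪(w : W), S ξ - (Q (S ξ) : W)⟫ = 0 :=
        (Submodule.mem_orthogonal L _).1 hsub _ w.2
      rw [inner_sub_right] at this
      linear_combination -this
    have h7 : ⟪(w : W), S ξ⟫ = ⟪(w : W), ξ⟫ := by
      conv_lhs => rw [← h5]
      exact S.inner_map_map _ _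
    have h8 : ⟪(w : W), ξ⟫ = 0 := by
      have h0 := w.2 ξ hξ
      rw [← inner_conj_symm, h0, map_zero]
    show ⟪w, Q (S ξ)⟫ = 0
    rw [Submodule.coe_inner] at *
    rw [h6, h7, h8]
  obtain ⟨v, hv⟩ := hmem
  refine ⟨S (ξ + (v : W)) - (v : W), ?_, (v : W), v.2, by abel⟩
  -- Q (S (ξ + v)) = v
  have hQ : Q (S (ξ + (v : W))) = v := by
    have : Q (S (ξ + (v : W))) = Q (S ξ) + Q (S (v : W)) := by
      rw [map_add, map_add]
    rw [this]
    have hTv : v - A v = Q (S ξ) := by simpa [T, sub_eq_add_neg] using hv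
    have hAv : A v = Q (S (v : W)) := rfl
    rw [← hTv, ← hAv]; abel
  have hsub : S (ξ + (v : W)) - (Q (S (ξ + (v : W))) : W) ∈ Lᗮ :=
    sub_starProjection_mem_orthogonal (K := L) _
  rw [hQ] at hsub
  have hsub2 : S (ξ + (v : W)) - (v : W) ∈ Hᗮᗮ := hsub
  rwa [Submodule.orthogonal_orthogonal] at hsub2
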